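/- arXiv:1101.3804 — 8 statements merged into one kernel-verified Lean document; each statement's English description precedes it below -/
import Mathlib

section
/- Let (V,d) be a finite metric space with n points whose maximum pairwise distance is 1. For every ε > 0, every probability distribution p* on V, every function g* : V × ℝ → ℝ, and every real number E such that Σ_{x∈V} p*(x)·|Avg(f) − g*(x, f(x))| ≤ E holds for every 1-Lipschitz function f : V → ℝ, there exists a probability distribution p on V such that Σ_{x∈V} p(x)·|Avg(f) − f(x)| ≤ E + ε holds for every 1-Lipschitz function f : V → ℝ. (That is, up to an arbitrarily small additive ε, the optimal randomized sampling algorithm may be assumed to output exactly the value it observes.) -/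
open Finset

lemma tele_sum (ψ : ℕ → ℝ) (K : ℕ) :
    ∑ m ∈ Finset.range K, ψ (m + 1) = ∑ m ∈ Finset.range K, ψ m + ψ K - ψ 0 := by
  induction K with
  | zero => simp
  | succ K ih => rw [Finset.sum_range_succ, Finset.sum_range_succ, ih]; ring

/-- The grid point value. -/
def gridVal {V : Type*} [Fintype V] (K : ℕ) (f : V → ℝ) (k : V → Fin K) : ℝ :=
  ∑ y, (k y : ℝ) * f y

lemma grid_split {α : Type*} [Fintype α] [DecidableEq α] (x : α) (K : ℕ)
    (w : α → ℝ) (φ : ℝ → ℝ) (s : ℝ) :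
    ∑ k : α → Fin K, φ (s + gridVal K w k) =
      ∑ k' : {j // j ≠ x} → Fin K, ∑ m ∈ Finset.range K,
        φ ((s + ∑ j : {j // j ≠ x}, (k' j : ℝ) * w j) + (m : ℝ) * w x) := by
  have hval : ∀ (m : Fin K) (k' : {j // j ≠ x} → Fin K),
      gridVal K w ((Equiv.funSplitAt x (Fin K)).symm (m, k')) =
        (m : ℝ) * w x + ∑ j : {j // j ≠ x}, (k' j : ℝ) * w j := by
    intro m k'
    set g := (Equiv.funSplitAt x (Fin K)).symm (m, k') with hg
    have h1 : (Equiv.funSplitAt x (Fin K)) g = (m, k') := Equiv.apply_symm_apply _ _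
    have h2 : g x = m := congrArg Prod.fst h1
    have h3 : ∀ (j : α) (hj : j ≠ x), g j = k' ⟨j, hj⟩ := by
      intro j hj
      have := congrFun (congrArg Prod.snd h1) ⟨j, hj⟩
      exact this
    rw [gridVal, Fintype.sum_eq_add_sum_compl x]
    congr 1
    · rw [h2]
    · rw [Finset.sum_subtype (p := fun j => j ≠ x) ({x}ᶜ : Finset α) (fun y => by simp)
        (fun y => (g y : ℝ) * w y)]
      exact Fintype.sum_congr _ _ (fun j => by rw [h3 j j.2])
  rw [← Equiv.sum_comp (Equiv.funSplitAt x (Fin K)).symm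
      (fun k => φ (s + gridVal K w k)), Fintype.sum_prod_type, Finset.sum_comm]
  refine Fintype.sum_congr _ _ (fun k' => ?_)
  rw [← Fin.sum_univ_eq_sum_range (fun m : ℕ =>
      φ ((s + ∑ j : {j // j ≠ x}, (k' j : ℝ) * w j) + (m : ℝ) * w x)) K]
  refine Fintype.sum_congr _ _ (fun m => ?_)
  rw [hval m k']
  ring_nf

lemma grid_shift {α : Type*} [Fintype α] [DecidableEq α] (x : α) (K : ℕ)
    (w : α → ℝ) (φ : ℝ → ℝ) (M : ℝ) (hM : ∀ t, |φ t| ≤ M) (r : ℝ) :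
    (K : ℝ) * |(∑ k : α → Fin K, φ (r + gridVal K w k)) -
        ∑ k : α → Fin K, φ (r + w x + gridVal K w k)| ≤
      2 * M * (K : ℝ) ^ Fintype.card α := by
  have hcard : Fintype.card ({j // j ≠ x} → Fin K) = K ^ (Fintype.card α - 1) := by
    rw [Fintype.card_fun, Fintype.card_fin]
    congr 1
    simp [Fintype.card_subtype_compl]
  rw [grid_split x K w φ r, grid_split x K w φ (r + w x)]
  rw [← Finset.sum_sub_distrib]
  have hbound : ∀ k' : {j // j ≠ x} → Fin K,
      |(∑ m ∈ Finset.range K, φ ((r + ∑ j : {j // j ≠ x}, (k' j : ℝ) * w j) + (m : ℝ) * w x)) -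
        ∑ m ∈ Finset.range K, φ ((r + w x + ∑ j : {j // j ≠ x}, (k' j : ℝ) * w j) + (m : ℝ) * w x)|
        ≤ 2 * M := by
    intro k'
    set C := ∑ j : {j // j ≠ x}, (k' j : ℝ) * w j with hC
    set ψ : ℕ → ℝ := fun m => φ ((r + C) + (m : ℝ) * w x) with hψ
    have h2 : ∀ m ∈ Finset.range K,
        φ ((r + w x + C) + (m : ℝ) * w x) = ψ (m + 1) := by
      intro m _
      simp only [hψ]
      congr 1
      push_cast
      ring
    rw [Finset.sum_congr rfl h2, tele_sum ψ K]
    have hs : (∑ m ∈ Finset.range K, ψ m) - (∑ m ∈ Finset.range K, ψ m + ψ K - ψ 0)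
        = ψ 0 - ψ K := by ring
    rw [hs]
    calc |ψ 0 - ψ K| ≤ |ψ 0| + |ψ K| := abs_sub _ _
    _ ≤ M + M := add_le_add (hM _) (hM _)
    _ = 2 * M := by ring
  calc (K : ℝ) * |∑ k' : {j // j ≠ x} → Fin K, _| ≤
      (K : ℝ) * ∑ k' : {j // j ≠ x} → Fin K, (2 * M) := by
        refine mul_le_mul_of_nonneg_left ?_ (by positivity)
        exact (Finset.abs_sum_le_sum_abs _ _).trans
            (Finset.sum_le_sum fun k' _ => hbound k')
  _ = 2 * M * (K : ℝ) ^ Fintype.card α := by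
      rw [Finset.sum_const, Finset.card_univ, hcard, nsmul_eq_mul]
      have h1 : 1 ≤ Fintype.card α := Fintype.card_pos_iff.mpr ⟨x⟩
      have h2 : (K:ℝ) * (K:ℝ) ^ (Fintype.card α - 1) = (K:ℝ) ^ Fintype.card α := by
        rw [← pow_succ']
        congr 1
        omega
      push_cast
      rw [← mul_assoc, h2]
      ring

/-- Up to an arbitrarily small additive ε, the optimal randomized
sampling algorithm on a finite metric space (of diameter 1) may be assumed to
output exactly the value it observes. -/
theorem stmt_0 {V : Type*} [MetricSpace V] [Fintype V] [Nonempty V]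
    (hdiam_le : ∀ x y : V, dist x y ≤ 1) (hdiam_eq : ∃ x y : V, dist x y = 1)
    (ε : ℝ) (hε : 0 < ε)
    (pstar : V → ℝ) (hpstar_nonneg : ∀ x, 0 ≤ pstar x)
    (hpstar_sum : ∑ x, pstar x = 1)
    (gstar : V × ℝ → ℝ) (E : ℝ)
    (hE : ∀ f : V → ℝ, (∀ x y, |f x - f y| ≤ dist x y) →
      ∑ x, pstar x * |(∑ y, f y) / (Fintype.card V : ℝ) - gstar (x, f x)| ≤ E) :
    ∃ p : V → ℝ, (∀ x, 0 ≤ p x) ∧ (∑ x, p x = 1) ∧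
      ∀ f : V → ℝ, (∀ x y, |f x - f y| ≤ dist x y) →
        ∑ x, p x * |(∑ y, f y) / (Fintype.card V : ℝ) - f x| ≤ E + ε := by
  classical
  have hnR : (0:ℝ) < (Fintype.card V : ℝ) := by
    exact_mod_cast Fintype.card_pos
  have hE0 : 0 ≤ E := by
    refine le_trans (Finset.sum_nonneg fun x _ =>
      mul_nonneg (hpstar_nonneg x) (abs_nonneg _)) (hE (fun _ => 0) ?_)
    intro x y
    simpa using dist_nonneg
  refine ⟨pstar, hpstar_nonneg, hpstar_sum, ?_⟩
  intro f hf
  set A := (∑ y, f y) / (Fintype.card V : ℝ) with hA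
  -- pointwise bound from constant functions
  have hpt : ∀ (x : V) (t : ℝ), pstar x * |gstar (x, t) - t| ≤ E := by
    intro x t
    have h := hE (fun _ => t) (fun a b => by simpa using dist_nonneg)
    have havg : (∑ _y : V, t) / (Fintype.card V : ℝ) = t := by
      rw [Finset.sum_const, Finset.card_univ, nsmul_eq_mul]
      field_simp
    rw [havg] at h
    refine le_trans ?_ h
    rw [abs_sub_comm]
    exact Finset.single_le_sum (f := fun y => pstar y * |t - gstar (y, t)|)
      (fun y _ => mul_nonneg (hpstar_nonneg y) (abs_nonneg _)) (Finset.mem_univ x)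
  -- shifted functions
  have hS : ∀ c : ℝ, ∑ x, pstar x * |A + c - gstar (x, f x + c)| ≤ E := by
    intro c
    have h := hE (fun y => f y + c) (fun a b => by simpa using hf a b)
    have havg : (∑ y, (f y + c)) / (Fintype.card V : ℝ) = A + c := by
      rw [Finset.sum_add_distrib, Finset.sum_const, Finset.card_univ, nsmul_eq_mul, hA]
      field_simp
    rwa [havg] at h
  -- reflected functions
  have hT : ∀ c : ℝ, ∑ x, pstar x * |A - f x + (gstar (x, c - f x) - (c - f x))| ≤ E := by
    intro c
    have h := hE (fun y => c - f y) (fun a b => by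
      have h1 : (c - f a) - (c - f b) = -(f a - f b) := by ring
      rw [h1, abs_neg]
      exact hf a b)
    have havg : (∑ y, (c - f y)) / (Fintype.card V : ℝ) = c - A := by
      rw [Finset.sum_sub_distrib, Finset.sum_const, Finset.card_univ, nsmul_eq_mul, hA]
      field_simp
    rw [havg] at h
    refine le_trans (le_of_eq (Finset.sum_congr rfl fun x _ => ?_)) h
    have h1 : A - f x + (gstar (x, c - f x) - (c - f x)) = -((c - A) - gstar (x, c - f x)) := by
      ring
    rw [h1, abs_neg]
  -- the grid
  set K := Nat.ceil (2 * (Fintype.card V : ℝ) * E / ε) + 1 with hKdef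
  have hK0 : (0:ℝ) < (K:ℝ) := by exact_mod_cast Nat.succ_pos _
  set N := (K:ℝ) ^ (Fintype.card V) with hN
  have hN0 : (0:ℝ) < N := pow_pos hK0 _
  have hcardN : ((Fintype.card (V → Fin K) : ℕ) : ℝ) = N := by
    rw [Fintype.card_fun, Fintype.card_fin, hN]
    push_cast
    rfl
  set U : V → ℝ := fun x =>
    ∑ k : V → Fin K, (gstar (x, f x + gridVal K f k) - (f x + gridVal K f k)) with hU
  set W : V → ℝ := fun x =>
    ∑ k : V → Fin K, (gstar (x, gridVal K f k - f x) - (gridVal K f k - f x)) with hW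
  have step1 : ∑ x, pstar x * |N * (A - f x) - U x| ≤ N * E := by
    have key1 : ∀ x : V, N * (A - f x) - U x
        = ∑ k : V → Fin K, (A + gridVal K f k - gstar (x, f x + gridVal K f k)) := by
      intro x
      have h1 : (∑ k : V → Fin K, (A + gridVal K f k - gstar (x, f x + gridVal K f k))) + U x
          = N * (A - f x) := by
        rw [hU]
        rw [← Finset.sum_add_distrib]
        have h2 : ∀ k ∈ (Finset.univ : Finset (V → Fin K)),
            (A + gridVal K f k - gstar (x, f x + gridVal K f k))
              + (gstar (x, f x + gridVal K f k) - (f x + gridVal K f k)) = A - f x :=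
          fun k _ => by ring
        rw [Finset.sum_congr rfl h2, Finset.sum_const, Finset.card_univ, nsmul_eq_mul, hcardN]
      linarith
    calc ∑ x, pstar x * |N * (A - f x) - U x|
        = ∑ x, pstar x * |∑ k : V → Fin K, (A + gridVal K f k - gstar (x, f x + gridVal K f k))| :=
          Finset.sum_congr rfl fun x _ => by rw [key1 x]
      _ ≤ ∑ x, pstar x * ∑ k : V → Fin K, |A + gridVal K f k - gstar (x, f x + gridVal K f k)| :=
          Finset.sum_le_sum fun x _ =>
            mul_le_mul_of_nonneg_left (Finset.abs_sum_le_sum_abs _ _) (hpstar_nonneg x)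
      _ = ∑ k : V → Fin K, ∑ x, pstar x * |A + gridVal K f k - gstar (x, f x + gridVal K f k)| := by
          simp_rw [Finset.mul_sum]
          exact Finset.sum_comm
      _ ≤ ∑ _k : V → Fin K, E := Finset.sum_le_sum fun k _ => hS (gridVal K f k)
      _ = N * E := by rw [Finset.sum_const, Finset.card_univ, nsmul_eq_mul, hcardN]
  have step2 : ∑ x, pstar x * |N * (A - f x) + W x| ≤ N * E := by
    have key2 : ∀ x : V, N * (A - f x) + W x
        = ∑ k : V → Fin K,
            (A - f x + (gstar (x, gridVal K f k - f x) - (gridVal K f k - f x))) := by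
      intro x
      rw [hW, Finset.sum_add_distrib, Finset.sum_const, Finset.card_univ, nsmul_eq_mul, hcardN]
    calc ∑ x, pstar x * |N * (A - f x) + W x|
        = ∑ x, pstar x * |∑ k : V → Fin K,
            (A - f x + (gstar (x, gridVal K f k - f x) - (gridVal K f k - f x)))| :=
          Finset.sum_congr rfl fun x _ => by rw [key2 x]
      _ ≤ ∑ x, pstar x * ∑ k : V → Fin K,
            |A - f x + (gstar (x, gridVal K f k - f x) - (gridVal K f k - f x))| :=
          Finset.sum_le_sum fun x _ =>
            mul_le_mul_of_nonneg_left (Finset.abs_sum_le_sum_abs _ _) (hpstar_nonneg x)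
      _ = ∑ k : V → Fin K, ∑ x, pstar x *
            |A - f x + (gstar (x, gridVal K f k - f x) - (gridVal K f k - f x))| := by
          simp_rw [Finset.mul_sum]
          exact Finset.sum_comm
      _ ≤ ∑ _k : V → Fin K, E := Finset.sum_le_sum fun k _ => hT (gridVal K f k)
      _ = N * E := by rw [Finset.sum_const, Finset.card_univ, nsmul_eq_mul, hcardN]
  have step3 : ∀ x, pstar x * |U x - W x| ≤ 4 * E * N / (K:ℝ) := by
    intro x
    set φ : ℝ → ℝ := fun t => pstar x * (gstar (x, t) - t) with hφ
    have hM : ∀ t, |φ t| ≤ E := by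
      intro t
      rw [hφ]
      simp only
      rw [abs_mul, abs_of_nonneg (hpstar_nonneg x)]
      exact hpt x t
    have hUW : pstar x * (U x - W x)
        = (∑ k : V → Fin K, φ (f x + gridVal K f k))
          - ∑ k : V → Fin K, φ (gridVal K f k - f x) := by
      simp only [hU, hW, hφ, mul_sub, Finset.mul_sum]
    have g1 := grid_shift x K f φ E hM 0
    have g2 := grid_shift x K f φ E hM (-(f x))
    rw [← hN] at g1 g2
    simp only [zero_add, neg_add_cancel, neg_add_eq_sub] at g1 g2
    set S1 := ∑ k : V → Fin K, φ (gridVal K f k) with hS1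
    set S2 := ∑ k : V → Fin K, φ (f x + gridVal K f k) with hS2
    set S3 := ∑ k : V → Fin K, φ (gridVal K f k - f x) with hS3
    have habs : pstar x * |U x - W x| = |pstar x * (U x - W x)| := by
      rw [abs_mul, abs_of_nonneg (hpstar_nonneg x)]
    rw [le_div_iff₀ hK0, habs, hUW]
    have t1 : |S2 - S3| ≤ |S2 - S1| + |S1 - S3| := abs_sub_le _ _ _
    have t2 : |S2 - S1| = |S1 - S2| := abs_sub_comm _ _
    have t3 : |S1 - S3| = |S3 - S1| := abs_sub_comm _ _
    have t4 := mul_le_mul_of_nonneg_right t1 hK0.le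
    rw [t2, t3] at t4
    nlinarith [g1, g2, t4]
  have hsum3 : ∑ x, pstar x * |U x - W x| ≤ (Fintype.card V : ℝ) * (4 * E * N / K) := by
    calc ∑ x, pstar x * |U x - W x| ≤ ∑ _x : V, (4 * E * N / (K:ℝ)) :=
          Finset.sum_le_sum fun x _ => step3 x
    _ = (Fintype.card V : ℝ) * (4 * E * N / K) := by
        rw [Finset.sum_const, Finset.card_univ, nsmul_eq_mul]
  have hptwise : ∀ x ∈ (Finset.univ : Finset V), 2 * (N * (pstar x * |A - f x|)) ≤
      pstar x * |N * (A - f x) - U x| + pstar x * |N * (A - f x) + W x|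
        + pstar x * |U x - W x| := by
    intro x _
    have e1 : |2 * (N * (A - f x))| = 2 * (N * |A - f x|) := by
      rw [abs_mul, abs_mul, abs_of_nonneg (by norm_num : (0:ℝ) ≤ 2), abs_of_nonneg hN0.le]
    have e2 : 2 * (N * (A - f x))
        = (N * (A - f x) - U x) + ((N * (A - f x) + W x) + (U x - W x)) := by ring
    have e3 : |2 * (N * (A - f x))| ≤
        |N * (A - f x) - U x| + (|N * (A - f x) + W x| + |U x - W x|) := by
      rw [e2]
      exact (abs_add_le _ _).trans (add_le_add_right (abs_add_le _ _) _)
    rw [e1] at e3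
    calc 2 * (N * (pstar x * |A - f x|)) = pstar x * (2 * (N * |A - f x|)) := by ring
    _ ≤ pstar x * (|N * (A - f x) - U x| + (|N * (A - f x) + W x| + |U x - W x|)) :=
        mul_le_mul_of_nonneg_left e3 (hpstar_nonneg x)
    _ = pstar x * |N * (A - f x) - U x| + pstar x * |N * (A - f x) + W x|
          + pstar x * |U x - W x| := by ring
  have main : 2 * (N * ∑ x, pstar x * |A - f x|)
      ≤ 2 * (N * E) + (Fintype.card V : ℝ) * (4 * E * N / K) := by
    calc 2 * (N * ∑ x, pstar x * |A - f x|)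
        = ∑ x, 2 * (N * (pstar x * |A - f x|)) := by rw [Finset.mul_sum, Finset.mul_sum]
    _ ≤ ∑ x, (pstar x * |N * (A - f x) - U x| + pstar x * |N * (A - f x) + W x|
          + pstar x * |U x - W x|) := Finset.sum_le_sum hptwise
    _ = (∑ x, pstar x * |N * (A - f x) - U x|) + (∑ x, pstar x * |N * (A - f x) + W x|)
          + ∑ x, pstar x * |U x - W x| := by rw [Finset.sum_add_distrib, Finset.sum_add_distrib]
    _ ≤ N * E + N * E + (Fintype.card V : ℝ) * (4 * E * N / K) :=
        add_le_add (add_le_add step1 step2) hsum3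
    _ = 2 * (N * E) + (Fintype.card V : ℝ) * (4 * E * N / K) := by ring
  have hKge : 2 * (Fintype.card V : ℝ) * E ≤ ε * K := by
    have h1 := Nat.le_ceil (2 * (Fintype.card V : ℝ) * E / ε)
    have h2 : ((⌈2 * (Fintype.card V : ℝ) * E / ε⌉₊ : ℕ) : ℝ) ≤ (K : ℝ) := by
      rw [hKdef]
      push_cast
      linarith
    have h3 : 2 * (Fintype.card V : ℝ) * E / ε ≤ (K:ℝ) := le_trans h1 h2
    calc 2 * (Fintype.card V : ℝ) * E = (2 * (Fintype.card V : ℝ) * E / ε) * ε := by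
          field_simp
    _ ≤ (K:ℝ) * ε := mul_le_mul_of_nonneg_right h3 hε.le
    _ = ε * K := mul_comm _ _
  have hfin : (Fintype.card V : ℝ) * (4 * E * N / K) ≤ 2 * ε * N := by
    have h4 : (Fintype.card V : ℝ) * (4 * E * N / K)
        = ((4 * (Fintype.card V : ℝ) * E) / K) * N := by ring
    rw [h4]
    have h5 : (4 * (Fintype.card V : ℝ) * E) / K ≤ 2 * ε := by
      rw [div_le_iff₀ hK0]
      nlinarith [hKge]
    exact mul_le_mul_of_nonneg_right h5 hN0.le
  have h6 : N * (2 * ∑ x, pstar x * |A - f x|) ≤ N * (2 * (E + ε)) := by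
    linarith [main, hfin]
  have h7 := le_of_mul_le_mul_left h6 hN0
  linarith
end

section
/- Let (V,d) be a finite metric space with n points whose maximum pairwise distance is 1, and let β > 0 be such that for every D > 0, every subset of V of diameter at most D can be covered by at most 6^β balls of diameter D/6. Let o ∈ V be a 1-median of V (a point minimizing Σ_{x∈V} d(o,x)) and let m = (1/n)·Σ_{x∈V} d(o,x). Then for every probability distribution p on V there exists a 1-Lipschitz function f : V → ℝ with Σ_{x∈V} p(x)·|Avg(f) − f(x)| ≥ m/(4·6^β). In other words, the worst-case expected error of any randomized sampling algorithm that outputs the observed value is at least m/(4·6^β). -/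
/-- In a finite metric space of diameter 1 with doubling exponent β
(every subset of diameter D can be covered by at most 6^β balls of diameter D/6),
with 1-median o and median value m, every probability distribution p admits a
1-Lipschitz function whose expected estimation error is at least m/(4·6^β). -/
theorem stmt_1 {V : Type*} [MetricSpace V] [Fintype V] [Nonempty V]
    (hdiam_le : ∀ x y : V, dist x y ≤ 1) (hdiam_eq : ∃ x y : V, dist x y = 1)
    (β : ℝ) (hβ : 0 < β)
    (hdouble : ∀ D : ℝ, 0 < D → ∀ S : Finset V,
      (∀ x ∈ S, ∀ y ∈ S, dist x y ≤ D) →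
      ∃ C : Finset V, (C.card : ℝ) ≤ (6 : ℝ) ^ β ∧
        ∀ x ∈ S, ∃ z ∈ C, dist x z ≤ D / 6 / 2)
    (o : V) (ho : ∀ z : V, ∑ x, dist o x ≤ ∑ x, dist z x)
    (m : ℝ) (hm : m = (∑ x, dist o x) / (Fintype.card V : ℝ))
    (p : V → ℝ) (hp_nonneg : ∀ x, 0 ≤ p x) (hp_sum : ∑ x, p x = 1) :
    ∃ f : V → ℝ, (∀ x y, |f x - f y| ≤ dist x y) ∧
      m / (4 * (6 : ℝ) ^ β) ≤
        ∑ x, p x * |(∑ y, f y) / (Fintype.card V : ℝ) - f x| := by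
  classical
  have hnpos : (0:ℝ) < (Fintype.card V : ℝ) := by exact_mod_cast Fintype.card_pos
  set c : ℝ := (6:ℝ) ^ β with hc
  have hc1 : (1:ℝ) ≤ c := by
    have h0 : (6:ℝ) ^ (0:ℝ) ≤ (6:ℝ) ^ β :=
      Real.rpow_le_rpow_of_exponent_le (by norm_num) hβ.le
    simpa using h0
  have hcpos : (0:ℝ) < c := lt_of_lt_of_le one_pos hc1
  -- m > 0
  have hm_pos : 0 < m := by
    obtain ⟨a, b, hab⟩ := hdiam_eq
    have htri : (1:ℝ) ≤ dist o a + dist o b := by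
      have := dist_triangle a o b
      rw [dist_comm a o] at this
      linarith [hab ▸ this]
    have ha : dist o a ≤ ∑ x, dist o x :=
      Finset.single_le_sum (f := fun x => dist o x) (fun i _ => dist_nonneg) (Finset.mem_univ a)
    have hb : dist o b ≤ ∑ x, dist o x :=
      Finset.single_le_sum (f := fun x => dist o x) (fun i _ => dist_nonneg) (Finset.mem_univ b)
    have : (0:ℝ) < ∑ x, dist o x := by linarith
    rw [hm]; positivity
  have havg : ∀ z : V, m ≤ (∑ y, dist z y) / (Fintype.card V : ℝ) := by
    intro z
    rw [hm]
    exact div_le_div_of_nonneg_right (ho z) hnpos.le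
  set S : Finset V := Finset.univ.filter (fun x => dist o x ≤ 3*m) with hS
  set q : ℝ := ∑ x ∈ Sᶜ, p x with hqdef
  have hq0 : 0 ≤ q := Finset.sum_nonneg (fun x _ => hp_nonneg x)
  have hSsum : ∑ x ∈ S, p x = 1 - q := by
    have := Finset.sum_add_sum_compl S p
    rw [hp_sum] at this
    linarith
  by_cases hcase : 1/(8*c) ≤ q
  · -- lots of mass far from o; use f = dist o ·
    refine ⟨fun x => dist o x, ?_, ?_⟩
    · intro x y
      simpa [dist_comm] using abs_dist_sub_le x y o
    · have hAvg : (∑ y, dist o y) / (Fintype.card V : ℝ) = m := hm.symm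
      simp only [hAvg]
      have h1 : ∀ x ∈ Sᶜ, p x * (2*m) ≤ p x * |m - dist o x| := by
        intro x hx
        have hx' : 3*m < dist o x := by
          simp only [hS, Finset.mem_compl, Finset.mem_filter, Finset.mem_univ,
            true_and, not_le] at hx
          exact hx
        have habs : 2*m ≤ |m - dist o x| := by
          rw [abs_sub_comm, abs_of_nonneg (by linarith)]
          linarith
        exact mul_le_mul_of_nonneg_left habs (hp_nonneg x)
      have h2 : ∑ x ∈ Sᶜ, p x * (2*m) ≤ ∑ x ∈ Sᶜ, p x * |m - dist o x| :=
        Finset.sum_le_sum h1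
      have h3 : ∑ x ∈ Sᶜ, p x * |m - dist o x| ≤ ∑ x, p x * |m - dist o x| :=
        Finset.sum_le_sum_of_subset_of_nonneg (Finset.subset_univ _)
          (fun x _ _ => mul_nonneg (hp_nonneg x) (abs_nonneg _))
      have h4 : ∑ x ∈ Sᶜ, p x * (2*m) = q * (2*m) := by
        rw [← Finset.sum_mul]
      have h5 : m/(4*c) ≤ q * (2*m) := by
        have : m/(4*c) = (1/(8*c)) * (2*m) := by field_simp; ring
        rw [this]
        exact mul_le_mul_of_nonneg_right hcase (by linarith)
      linarith
  · -- mass concentrated near o; use covering of S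
    push_neg at hcase
    have h18 : 1/(8*c) ≤ 1/8 := by
      rw [div_le_div_iff₀ (by positivity) (by norm_num)]
      nlinarith
    have h1q : (7:ℝ)/8 ≤ 1 - q := by linarith
    obtain ⟨C, hCcard, hCcover⟩ := hdouble (6*m) (by linarith) S
      (by
        intro x hx y hy
        simp only [hS, Finset.mem_filter, Finset.mem_univ, true_and] at hx hy
        have := dist_triangle x o y
        rw [dist_comm x o] at this
        linarith)
    have hcover' : ∀ x ∈ S, ∃ z ∈ C, dist x z ≤ m/2 := by
      intro x hx
      obtain ⟨z, hzC, hz⟩ := hCcover x hx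
      exact ⟨z, hzC, by linarith [show 6*m/6/2 = m/2 by ring]⟩
    set w : V → ℝ := fun z => ∑ x ∈ S.filter (fun x => dist x z ≤ m/2), p x with hw
    have hS_le : ∑ x ∈ S, p x ≤ ∑ z ∈ C, w z := by
      have hstep : ∀ x ∈ S, p x ≤ ∑ z ∈ C, (if dist x z ≤ m/2 then p x else 0) := by
        intro x hx
        obtain ⟨z, hzC, hz⟩ := hcover' x hx
        have heq : p x = (if dist x z ≤ m/2 then p x else 0) := by rw [if_pos hz]
        refine le_trans (le_of_eq heq) ?_
        exact Finset.single_le_sum (f := fun z' => if dist x z' ≤ m/2 then p x else 0)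
          (fun i _ => by by_cases h : dist x i ≤ m/2 <;> simp [h, hp_nonneg x]) hzC
      calc ∑ x ∈ S, p x ≤ ∑ x ∈ S, ∑ z ∈ C, (if dist x z ≤ m/2 then p x else 0) :=
            Finset.sum_le_sum hstep
        _ = ∑ z ∈ C, ∑ x ∈ S, (if dist x z ≤ m/2 then p x else 0) := Finset.sum_comm
        _ = ∑ z ∈ C, w z := by
            refine Finset.sum_congr rfl (fun z _ => ?_)
            rw [hw]
            exact (Finset.sum_filter _ _).symm
    have hCne : C.Nonempty := by
      by_contra h
      rw [Finset.not_nonempty_iff_eq_empty] at h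
      rw [h, Finset.sum_empty] at hS_le
      rw [hSsum] at hS_le
      linarith
    have hCcardpos : (0:ℝ) < (C.card : ℝ) := by
      exact_mod_cast Finset.card_pos.mpr hCne
    obtain ⟨z, hzC, hzheavy⟩ :
        ∃ z ∈ C, (1-q)/(C.card : ℝ) ≤ w z := by
      apply Finset.exists_le_of_sum_le hCne
      rw [Finset.sum_const, nsmul_eq_mul, mul_div_cancel₀ _ (ne_of_gt hCcardpos)]
      rw [← hSsum]
      exact hS_le
    have hheavy : (1-q)/c ≤ w z := by
      refine le_trans ?_ hzheavy
      exact div_le_div_of_nonneg_left (by linarith) hCcardpos hCcard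
    refine ⟨fun x => dist z x, ?_, ?_⟩
    · intro x y
      simpa [dist_comm] using abs_dist_sub_le x y z
    · set A : ℝ := (∑ y, dist z y) / (Fintype.card V : ℝ) with hA
      have hAm : m ≤ A := havg z
      have h1 : ∀ x ∈ S.filter (fun x => dist x z ≤ m/2),
          p x * (m/2) ≤ p x * |A - dist z x| := by
        intro x hx
        rw [Finset.mem_filter] at hx
        have hxz : dist z x ≤ m/2 := by rw [dist_comm]; exact hx.2
        have habs : m/2 ≤ |A - dist z x| := by
          rw [abs_of_nonneg (by linarith)]
          linarith
        exact mul_le_mul_of_nonneg_left habs (hp_nonneg x)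
      have h2 : w z * (m/2) ≤ ∑ x ∈ S.filter (fun x => dist x z ≤ m/2),
          p x * |A - dist z x| := by
        rw [hw, Finset.sum_mul]
        exact Finset.sum_le_sum h1
      have h3 : ∑ x ∈ S.filter (fun x => dist x z ≤ m/2), p x * |A - dist z x|
          ≤ ∑ x, p x * |A - dist z x| :=
        Finset.sum_le_sum_of_subset_of_nonneg (Finset.subset_univ _)
          (fun x _ _ => mul_nonneg (hp_nonneg x) (abs_nonneg _))
      have h4 : (1-q)/c * (m/2) ≤ w z * (m/2) :=
        mul_le_mul_of_nonneg_right hheavy (by linarith)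
      have h5 : m/(4*c) ≤ (1-q)/c * (m/2) := by
        rw [div_mul_eq_mul_div, div_le_div_iff₀ (by positivity) hcpos]
        nlinarith [mul_nonneg hm_pos.le hcpos.le]
      linarith
end

section
/- Let (V,d) be a finite metric space with maximum pairwise distance 1, let 0 < δ ≤ 1, and let Q be a nonempty set of functions V → ℝ satisfying: (i) for every 1-Lipschitz f : V → ℝ there is f' ∈ Q such that |Err(p,f') − Err(p,f)| ≤ (δ/2)·MaxErr(p) for every probability distribution p on V, and (ii) for every f ∈ Q there is a 1-Lipschitz f' : V → ℝ such that |Err(p,f') − Err(p,f)| ≤ (δ/2)·MaxErr(p) for every probability distribution p on V. Suppose the probability distribution p minimizes MaxErr over all probability distributions on V, and the probability distribution q minimizes MaxErrQ over all probability distributions on V, where MaxErrQ(p') = sup_{f∈Q} Err(p',f). Then MaxErr(q) ≤ (1 + 2δ)·MaxErr(p). -/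
/-- A function on a metric space is 1-Lipschitz. -/
def IsLip {V : Type*} [MetricSpace V] (f : V → ℝ) : Prop :=
  ∀ x y, |f x - f y| ≤ dist x y

/-- A probability distribution on a finite type. -/
def IsProb {V : Type*} [Fintype V] (p : V → ℝ) : Prop :=
  (∀ x, 0 ≤ p x) ∧ ∑ x, p x = 1

/-- Average of a function over a finite type. -/
noncomputable def avgFn {V : Type*} [Fintype V] (f : V → ℝ) : ℝ :=
  (∑ x, f x) / (Fintype.card V : ℝ)

/-- Expected estimation error of sampling according to p against input f. -/
noncomputable def errFn {V : Type*} [Fintype V] (p f : V → ℝ) : ℝ :=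
  ∑ x, p x * |avgFn f - f x|

/-- Worst-case error of p against 1-Lipschitz functions. -/
noncomputable def maxErr {V : Type*} [MetricSpace V] [Fintype V] (p : V → ℝ) : ℝ :=
  sSup (errFn p '' {f | IsLip f})

/-- Worst-case error of p against functions from a class Q. -/
noncomputable def maxErrQ {V : Type*} [Fintype V] (Q : Set (V → ℝ)) (p : V → ℝ) : ℝ :=
  sSup (errFn p '' Q)

lemma avg_abs_le {V : Type*} [MetricSpace V] [Fintype V] [Nonempty V]
    (hd : ∀ x y : V, dist x y ≤ 1) {f : V → ℝ} (hf : IsLip f) (x : V) :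
    |avgFn f - f x| ≤ 1 := by
  have hn : (0:ℝ) < (Fintype.card V : ℝ) := by
    exact_mod_cast Fintype.card_pos
  have heq : avgFn f - f x = (∑ y, (f y - f x)) / (Fintype.card V : ℝ) := by
    rw [avgFn, Finset.sum_sub_distrib, Finset.sum_const, Finset.card_univ]
    field_simp
    rw [nsmul_eq_mul]
  rw [heq, abs_div, abs_of_pos hn, div_le_one hn]
  calc |∑ y, (f y - f x)| ≤ ∑ y, |f y - f x| := Finset.abs_sum_le_sum_abs _ _
    _ ≤ ∑ _y : V, (1:ℝ) := Finset.sum_le_sum (fun y _ => (hf y x).trans (hd y x))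
    _ = (Fintype.card V : ℝ) := by simp

lemma err_le_one {V : Type*} [MetricSpace V] [Fintype V] [Nonempty V]
    (hd : ∀ x y : V, dist x y ≤ 1) {p f : V → ℝ} (hp : IsProb p) (hf : IsLip f) :
    errFn p f ≤ 1 := by
  calc errFn p f ≤ ∑ x, p x * 1 :=
        Finset.sum_le_sum (fun x _ => mul_le_mul_of_nonneg_left (avg_abs_le hd hf x) (hp.1 x))
    _ = 1 := by simp [hp.2]

lemma err_nonneg {V : Type*} [Fintype V] {p : V → ℝ} (hp : IsProb p) (f : V → ℝ) :
    0 ≤ errFn p f :=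
  Finset.sum_nonneg fun x _ => mul_nonneg (hp.1 x) (abs_nonneg _)

lemma maxErr_bddAbove {V : Type*} [MetricSpace V] [Fintype V] [Nonempty V]
    (hd : ∀ x y : V, dist x y ≤ 1) {p : V → ℝ} (hp : IsProb p) :
    BddAbove (errFn p '' {f | IsLip f}) := by
  refine ⟨1, ?_⟩
  rintro r ⟨f, hf, rfl⟩
  exact err_le_one hd hp hf

lemma maxErr_nonneg {V : Type*} [MetricSpace V] [Fintype V] [Nonempty V]
    (hd : ∀ x y : V, dist x y ≤ 1) {p : V → ℝ} (hp : IsProb p) :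
    0 ≤ maxErr p := by
  have h0 : errFn p (fun _ => 0) = 0 := by simp [errFn, avgFn]
  have : (0:ℝ) ∈ errFn p '' {f | IsLip f} :=
    ⟨fun _ => 0, fun x y => by simpa using dist_nonneg, h0⟩
  exact le_csSup (maxErr_bddAbove hd hp) this

/-- If Q δ-approximates the class of 1-Lipschitz functions, then the
optimizer of the discretized problem is a (1+2δ)-approximation to the optimizer of
the exact problem. -/
theorem stmt_2 {V : Type*} [MetricSpace V] [Fintype V] [Nonempty V]
    (hdiam_le : ∀ x y : V, dist x y ≤ 1) (hdiam_eq : ∃ x y : V, dist x y = 1)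
    (δ : ℝ) (hδ0 : 0 < δ) (hδ1 : δ ≤ 1)
    (Q : Set (V → ℝ)) (hQ : Q.Nonempty)
    (happrox₁ : ∀ f : V → ℝ, IsLip f → ∃ f' ∈ Q,
      ∀ p : V → ℝ, IsProb p → |errFn p f' - errFn p f| ≤ δ / 2 * maxErr p)
    (happrox₂ : ∀ f ∈ Q, ∃ f' : V → ℝ, IsLip f' ∧
      ∀ p : V → ℝ, IsProb p → |errFn p f' - errFn p f| ≤ δ / 2 * maxErr p)
    (p q : V → ℝ) (hp : IsProb p) (hq : IsProb q)
    (hp_min : ∀ p' : V → ℝ, IsProb p' → maxErr p ≤ maxErr p')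
    (hq_min : ∀ p' : V → ℝ, IsProb p' → maxErrQ Q q ≤ maxErrQ Q p') :
    maxErr q ≤ (1 + 2 * δ) * maxErr p := by
  have hMp0 : 0 ≤ maxErr p := maxErr_nonneg hdiam_le hp
  have hMq0 : 0 ≤ maxErr q := maxErr_nonneg hdiam_le hq
  have hMq1 : maxErr q ≤ 1 := Real.sSup_le (by rintro r ⟨f, hf, rfl⟩; exact err_le_one hdiam_le hq hf) zero_le_one
  -- bddAbove of Q-image under errFn q
  have hbddQq : BddAbove (errFn q '' Q) := by
    refine ⟨1 + δ / 2 * maxErr q, ?_⟩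
    rintro r ⟨g, hg, rfl⟩
    obtain ⟨g', hg', hgg'⟩ := happrox₂ g hg
    have h1 := hgg' q hq
    have h2 : errFn q g' ≤ 1 := err_le_one hdiam_le hq hg'
    have := abs_le.mp h1
    linarith [this.1]
  -- maxErrQ Q q is nonneg
  obtain ⟨g0, hg0⟩ := hQ
  have hQq0 : 0 ≤ maxErrQ Q q :=
    le_trans (err_nonneg hq g0) (le_csSup hbddQq ⟨g0, hg0, rfl⟩)
  -- Step 1: maxErr q ≤ maxErrQ Q q + δ/2 * maxErr q
  have hstep1 : maxErr q ≤ maxErrQ Q q + δ / 2 * maxErr q := by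
    refine Real.sSup_le ?_ (by positivity)
    rintro r ⟨f, hf, rfl⟩
    obtain ⟨f', hf', hff'⟩ := happrox₁ f hf
    have h1 := (abs_le.mp (hff' q hq)).1
    have h2 : errFn q f' ≤ maxErrQ Q q := le_csSup hbddQq ⟨f', hf', rfl⟩
    linarith
  -- Step 2: maxErrQ Q q ≤ maxErrQ Q p
  have hstep2 : maxErrQ Q q ≤ maxErrQ Q p := hq_min p hp
  -- Step 3: maxErrQ Q p ≤ maxErr p + δ/2 * maxErr p
  have hMpBdd := maxErr_bddAbove hdiam_le hp
  have hstep3 : maxErrQ Q p ≤ maxErr p + δ / 2 * maxErr p := by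
    refine Real.sSup_le ?_ (by positivity)
    rintro r ⟨g, hg, rfl⟩
    obtain ⟨g', hg', hgg'⟩ := happrox₂ g hg
    have h1 := (abs_le.mp (hgg' p hp)).1
    have h2 : errFn p g' ≤ maxErr p := le_csSup hMpBdd ⟨g', hg', rfl⟩
    linarith
  -- Combine
  have hmain : maxErr q ≤ maxErr p + δ / 2 * maxErr p + δ / 2 * maxErr q := by linarith
  nlinarith [mul_nonneg hMp0 (mul_nonneg hδ0.le (sub_nonneg.mpr hδ1)), mul_nonneg hδ0.le hMq0]
end

section
/- Let (V,d) be a finite metric space, let s : V → ℝ with s(x) ≥ 0 for all x, and let f : V → ℝ satisfy the relaxed Lipschitz condition |f(x) − f(y)| ≤ d(x,y) + s(x) + s(y) for all x, y ∈ V. Then there exists a function f' : V → ℝ such that |f'(x) − f'(y)| ≤ d(x,y) for all x, y ∈ V, and |f(x) − f'(x)| ≤ s(x) for all x ∈ V. -/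
/-- Any function on a finite metric space satisfying the relaxed
Lipschitz condition |f(x) − f(y)| ≤ d(x,y) + s(x) + s(y) can be adjusted by at
most s(x) at each point x to obtain a 1-Lipschitz function. -/
theorem stmt_3 {V : Type*} [MetricSpace V] [Fintype V]
    (s : V → ℝ) (hs : ∀ x, 0 ≤ s x)
    (f : V → ℝ) (hf : ∀ x y, |f x - f y| ≤ dist x y + s x + s y) :
    ∃ f' : V → ℝ, (∀ x y, |f' x - f' y| ≤ dist x y) ∧
      ∀ x, |f x - f' x| ≤ s x := by
  rcases isEmpty_or_nonempty V with hV | hV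
  · exact ⟨f, fun x => hV.elim x, fun x => hV.elim x⟩
  have hne : (Finset.univ : Finset V).Nonempty := Finset.univ_nonempty
  set f' : V → ℝ := fun x => Finset.univ.inf' hne (fun y => f y + s y + dist x y) with hf'
  have hle : ∀ x y, f' x ≤ f y + s y + dist x y := fun x y =>
    Finset.inf'_le _ (Finset.mem_univ y)
  have hlip : ∀ x y, f' x - f' y ≤ dist x y := by
    intro x y
    obtain ⟨z, -, hz⟩ := Finset.exists_mem_eq_inf' hne (fun y' => f y' + s y' + dist y y')
    have h1 : f' x ≤ f z + s z + dist x z := hle x z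
    have h2 : dist x z ≤ dist x y + dist y z := dist_triangle x y z
    have : f' y = f z + s z + dist y z := hz
    linarith
  have hlow : ∀ x, f x - s x ≤ f' x := by
    intro x
    apply Finset.le_inf'
    intro y _
    have := abs_le.mp (hf x y)
    have := dist_comm x y ▸ this.2
    linarith [this]
  refine ⟨f', fun x y => abs_le.mpr ⟨by have := hlip y x; rw [dist_comm y x] at this; linarith, hlip x y⟩, fun x => ?_⟩
  have h1 : f' x ≤ f x + s x := by
    have := hle x x; simpa using this
  exact abs_le.mpr ⟨by linarith [hlow x], by linarith [hlow x]⟩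
end

section
/- Let 0 = x₁ ≤ x₂ ≤ … ≤ x_n = 1 be points in [0,1] and let γ > 0. For every function h ∈ Q_γ there exists a function f : {x₁,…,x_n} → ℝ satisfying |f(x_i) − f(x_j)| ≤ |x_i − x_j| for all i,j and Σ_{i=1}^n f(x_i) = 0, such that |Err(p,h) − Err(p,f)| ≤ 6γ for every probability distribution p on {x₁,…,x_n}. -/
/-- Every function in the discretized class Q_γ on points
0 = x₁ ≤ … ≤ x_n = 1 on the line is within additive error 6γ (in expected
estimation error, against every sampling distribution) of some 1-Lipschitz
mean-zero function. -/
theorem stmt_5 (n : ℕ) (hn : 0 < n) (x : Fin n → ℝ) (hmono : Monotone x)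
    (hfirst : x ⟨0, hn⟩ = 0) (hlast : x ⟨n - 1, Nat.sub_lt hn Nat.one_pos⟩ = 1)
    (γ : ℝ) (hγ : 0 < γ)
    (h : Fin n → ℝ)
    (hmult : ∀ i, ∃ k : ℤ, h i = k * γ)
    (hrelax : ∀ i j, |h i - h j| ≤ |x i - x j| + γ)
    (hsum : |∑ i, h i| ≤ n * γ) :
    ∃ f : Fin n → ℝ,
      (∀ i j, |f i - f j| ≤ |x i - x j|) ∧
      (∑ i, f i = 0) ∧
      ∀ p : Fin n → ℝ, (∀ i, 0 ≤ p i) → (∑ i, p i = 1) →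
        |(∑ i, p i * |(∑ j, h j) / (n : ℝ) - h i|) -
         (∑ i, p i * |(∑ j, f j) / (n : ℝ) - f i|)| ≤ 6 * γ := by
  have hne : (Finset.univ : Finset (Fin n)).Nonempty := ⟨⟨0, hn⟩, Finset.mem_univ _⟩
  have hnR : (0 : ℝ) < n := by exact_mod_cast hn
  set f0 : Fin n → ℝ := fun i => Finset.univ.inf' hne (fun j => h j + |x i - x j|) with hf0
  have hle : ∀ i, f0 i ≤ h i := by
    intro i
    have := Finset.inf'_le (fun j => h j + |x i - x j|) (Finset.mem_univ i)
    simp only [sub_self, abs_zero, add_zero] at this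
    exact this
  have hge : ∀ i, h i - γ ≤ f0 i := by
    intro i
    apply Finset.le_inf'
    intro j _
    have h1 := (abs_le.mp (hrelax i j)).2
    have h2 := le_abs_self (h i - h j)
    linarith
  have hlip0 : ∀ i k, f0 i - f0 k ≤ |x i - x k| := by
    intro i k
    have : f0 i - |x i - x k| ≤ f0 k := by
      apply Finset.le_inf'
      intro j _
      have htri : |x i - x j| ≤ |x i - x k| + |x k - x j| := abs_sub_le _ _ _
      have := Finset.inf'_le (fun j => h j + |x i - x j|) (Finset.mem_univ j)
      linarith
    linarith
  have hlip : ∀ i k, |f0 i - f0 k| ≤ |x i - x k| := by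
    intro i k
    rw [abs_sub_le_iff]
    exact ⟨hlip0 i k, by simpa [abs_sub_comm] using hlip0 k i⟩
  set c : ℝ := (∑ i, f0 i) / n with hc
  have hsumdiff : |∑ i, f0 i - ∑ i, h i| ≤ n * γ := by
    rw [← Finset.sum_sub_distrib]
    calc |∑ i, (f0 i - h i)| ≤ ∑ i, |f0 i - h i| := Finset.abs_sum_le_sum_abs _ _
      _ ≤ ∑ _i : Fin n, γ := by
          apply Finset.sum_le_sum
          intro i _
          rw [abs_le]
          constructor <;> [linarith [hge i]; linarith [hle i]]
      _ = n * γ := by simp [mul_comm]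
  have hcbound : |c| ≤ 2 * γ := by
    rw [hc, abs_div, abs_of_pos hnR, div_le_iff₀ hnR]
    have : |∑ i, f0 i| ≤ |∑ i, f0 i - ∑ i, h i| + |∑ i, h i| := by
      have := abs_add_le (∑ i, f0 i - ∑ i, h i) (∑ i, h i)
      simpa using this
    nlinarith
  refine ⟨fun i => f0 i - c, ?_, ?_, ?_⟩
  · intro i j
    simpa using hlip i j
  · have : ∑ i, (f0 i - c) = (∑ i, f0 i) - n * c := by
      rw [Finset.sum_sub_distrib]
      simp [mul_comm]
    rw [this, hc, mul_div_cancel₀ _ (ne_of_gt hnR)]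
    ring
  · intro p hp hp1
    have hfsum : ∑ i, (f0 i - c) = 0 := by
      rw [Finset.sum_sub_distrib]
      simp [hc, mul_comm, mul_div_cancel₀ _ (ne_of_gt hnR)]
    rw [hfsum]
    have hA : |(∑ j, h j) / n| ≤ γ := by
      rw [abs_div, abs_of_pos hnR, div_le_iff₀ hnR]
      linarith [hsum]
    set A : ℝ := (∑ j, h j) / n with hAdef
    have key : ∀ i, |(|A - h i| - |(0:ℝ) / n - (f0 i - c)|)| ≤ 4 * γ := by
      intro i
      have e1 : |(0:ℝ) / n - (f0 i - c)| = |f0 i - c| := by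
        rw [zero_div, zero_sub, abs_neg]
      rw [e1]
      have h2 : |(|A - h i| - |f0 i - c|)| ≤ |(A - h i) + (f0 i - c)| := by
        have t := abs_abs_sub_abs_le_abs_sub (A - h i) (c - f0 i)
        rw [abs_sub_comm c (f0 i)] at t
        have e : (A - h i) - (c - f0 i) = (A - h i) + (f0 i - c) := by ring
        rw [e] at t
        exact t
      have h3 : |(A - h i) + (f0 i - c)| ≤ |A| + |f0 i - h i| + |c| := by
        have e2 : (A - h i) + (f0 i - c) = A + (f0 i - h i) + (-c) := by ring
        rw [e2]
        calc |A + (f0 i - h i) + (-c)| ≤ |A + (f0 i - h i)| + |(-c)| := abs_add_le _ _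
          _ ≤ |A| + |f0 i - h i| + |c| := by
              have := abs_add_le A (f0 i - h i)
              rw [abs_neg]; linarith
      have h4 : |f0 i - h i| ≤ γ := by
        rw [abs_le]; constructor <;> [linarith [hge i]; linarith [hle i]]
      linarith
    calc |(∑ i, p i * |A - h i|) - (∑ i, p i * |(0:ℝ) / n - (f0 i - c)|)|
        = |∑ i, p i * (|A - h i| - |(0:ℝ) / n - (f0 i - c)|)| := by
          rw [← Finset.sum_sub_distrib]
          congr 1; apply Finset.sum_congr rfl; intro i _; ring
      _ ≤ ∑ i, |p i * (|A - h i| - |(0:ℝ) / n - (f0 i - c)|)| :=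
          Finset.abs_sum_le_sum_abs _ _
      _ ≤ ∑ i, p i * (4 * γ) := by
          apply Finset.sum_le_sum
          intro i _
          rw [abs_mul, abs_of_nonneg (hp i)]
          exact mul_le_mul_of_nonneg_left (key i) (hp i)
      _ = 4 * γ := by rw [← Finset.sum_mul, hp1, one_mul]
      _ ≤ 6 * γ := by linarith
end

section
/- For every probability measure μ on [0,1] there exists a function f ∈ L₀ (i.e., f : [0,1] → ℝ 1-Lipschitz with ∫₀¹ f(x) dx = 0) such that ∫₀¹ |f(x)| dμ(x) ≥ 1 − √3/2. (That is, no randomized sampling distribution that outputs the observed value can achieve worst-case expected error below 1 − √3/2.) -/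
open MeasureTheory

lemma ptwise (s c : ℝ) (hc : 0 ≤ c) : c ≤ |(|s| - c)| + |(|s - c| - c)| := by
  rcases abs_cases s with ⟨h1, h1'⟩ | ⟨h1, h1'⟩ <;>
    rcases abs_cases (s - c) with ⟨h2, h2'⟩ | ⟨h2, h2'⟩ <;>
      rcases abs_cases (|s| - c) with ⟨h3, h3'⟩ | ⟨h3, h3'⟩ <;>
        rcases abs_cases (|s - c| - c) with ⟨h4, h4'⟩ | ⟨h4, h4'⟩ <;>
          linarith

lemma integral_abs_sub (a : ℝ) (ha : 0 ≤ a) (ha1 : a ≤ 1) :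
    ∫ x in (0:ℝ)..1, |x - a| = a ^ 2 - a + 1 / 2 := by
  have hInt : ∀ u v : ℝ, IntervalIntegrable (fun x => |x - a|) volume u v := fun u v =>
    (continuous_abs.comp (continuous_id.sub continuous_const)).intervalIntegrable u v
  rw [← intervalIntegral.integral_add_adjacent_intervals (hInt 0 a) (hInt a 1)]
  have h1 : ∫ x in (0:ℝ)..a, |x - a| = ∫ x in (0:ℝ)..a, (a - x) := by
    apply intervalIntegral.integral_congr
    intro x hx
    rw [Set.uIcc_of_le ha] at hx
    show |x - a| = a - x
    rw [abs_of_nonpos (by linarith [hx.2])]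
    ring
  have h2 : ∫ x in a..(1:ℝ), |x - a| = ∫ x in a..(1:ℝ), (x - a) := by
    apply intervalIntegral.integral_congr
    intro x hx
    rw [Set.uIcc_of_le ha1] at hx
    show |x - a| = x - a
    rw [abs_of_nonneg (by linarith [hx.1])]
  rw [h1, h2]
  have e1 : ∫ x in (0:ℝ)..a, (a - x) = a * a - a ^ 2 / 2 := by
    rw [intervalIntegral.integral_sub intervalIntegrable_const intervalIntegral.intervalIntegrable_id]
    simp [integral_id]
  have e2 : ∫ x in a..(1:ℝ), (x - a) = (1 ^ 2 - a ^ 2) / 2 - a * (1 - a) := by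
    rw [intervalIntegral.integral_sub intervalIntegral.intervalIntegrable_id intervalIntegrable_const]
    simp [integral_id]
    ring
  rw [e1, e2]; ring

/-- No randomized sampling distribution on [0,1] that outputs the
observed value achieves worst-case expected error below 1 − √3/2: for every
probability measure μ on [0,1] there is a mean-zero 1-Lipschitz function f with
∫ |f| dμ ≥ 1 − √3/2. -/
theorem stmt_7 (μ : Measure ℝ) [IsProbabilityMeasure μ]
    (hμ : μ (Set.Icc (0 : ℝ) 1) = 1) :
    ∃ f : ℝ → ℝ,
      (∀ x ∈ Set.Icc (0 : ℝ) 1, ∀ y ∈ Set.Icc (0 : ℝ) 1, |f x - f y| ≤ |x - y|) ∧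
      (∫ x in (0 : ℝ)..1, f x = 0) ∧
      1 - Real.sqrt 3 / 2 ≤ ∫ x in Set.Icc (0 : ℝ) 1, |f x| ∂μ := by
  have h3 : Real.sqrt 3 ^ 2 = 3 := Real.sq_sqrt (by norm_num)
  have h3l : (1 : ℝ) ≤ Real.sqrt 3 := by nlinarith [Real.sqrt_nonneg 3]
  have h3u : Real.sqrt 3 ≤ 2 := by nlinarith [Real.sqrt_nonneg 3]
  set a : ℝ := (Real.sqrt 3 - 1) / 2 with ha_def
  set b : ℝ := (3 - Real.sqrt 3) / 2 with hb_def
  set c : ℝ := 2 - Real.sqrt 3 with hc_def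
  have hc : 0 ≤ c := by simp [hc_def]; linarith
  have hba : b = a + c := by simp [ha_def, hb_def, hc_def]; ring
  set f₁ : ℝ → ℝ := fun x => |x - a| - c with hf₁
  set f₂ : ℝ → ℝ := fun x => |x - b| - c with hf₂
  -- Lipschitz
  have hLip : ∀ t : ℝ, ∀ x ∈ Set.Icc (0:ℝ) 1, ∀ y ∈ Set.Icc (0:ℝ) 1,
      |(|x - t| - c) - (|y - t| - c)| ≤ |x - y| := by
    intro t x _ y _
    have : (|x - t| - c) - (|y - t| - c) = |x - t| - |y - t| := by ring
    rw [this]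
    calc |(|x - t| - |y - t|)| ≤ |(x - t) - (y - t)| := abs_abs_sub_abs_le_abs_sub _ _
      _ = |x - y| := by ring_nf
  -- mean zero
  have hmean : ∀ t : ℝ, 0 ≤ t → t ≤ 1 → t ^ 2 - t + 1 / 2 = c →
      ∫ x in (0:ℝ)..1, (|x - t| - c) = 0 := by
    intro t ht ht1 htc
    have hA : IntervalIntegrable (fun x : ℝ => |x - t|) volume 0 1 :=
      ((continuous_id.sub continuous_const).abs : Continuous fun x : ℝ => |x - t|).intervalIntegrable 0 1
    rw [intervalIntegral.integral_sub hA intervalIntegrable_const,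
      integral_abs_sub t ht ht1, htc]
    simp
  have hmean₁ : ∫ x in (0:ℝ)..1, f₁ x = 0 := by
    apply hmean a (by simp [ha_def]; linarith) (by simp [ha_def]; linarith)
    simp only [ha_def, hc_def]; nlinarith
  have hmean₂ : ∫ x in (0:ℝ)..1, f₂ x = 0 := by
    apply hmean b (by simp [hb_def]; linarith) (by simp [hb_def]; linarith)
    simp only [hb_def, hc_def]; nlinarith
  -- pointwise bound
  have hpt : ∀ x : ℝ, c ≤ |f₁ x| + |f₂ x| := by
    intro x
    have := ptwise (x - a) c hc
    have hxb : x - b = x - a - c := by rw [hba]; ring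
    simpa [hf₁, hf₂, hxb] using this
  -- integrability
  have hfin : IsFiniteMeasure (μ.restrict (Set.Icc (0:ℝ) 1)) := by
    constructor
    rw [Measure.restrict_apply_univ, hμ]; exact ENNReal.one_lt_top
  have hIntAbs : ∀ t : ℝ, Integrable (fun x => |(|x - t| - c)|)
      (μ.restrict (Set.Icc (0:ℝ) 1)) := by
    intro t
    have hcont : Continuous fun x : ℝ => |(|x - t| - c)| :=
      ((continuous_abs.comp (continuous_id.sub continuous_const)).sub
        continuous_const).abs
    apply Integrable.mono' (integrable_const (2 + |t| + |c|))
      hcont.aestronglyMeasurable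
    filter_upwards [ae_restrict_mem measurableSet_Icc] with x hx
    have h1 : |x - t| ≤ |x| + |t| := abs_sub x t
    have hx1 : |x| ≤ 1 := by
      rw [abs_le]; exact ⟨by linarith [hx.1], hx.2⟩
    rw [Real.norm_eq_abs, abs_abs]
    calc |(|x - t| - c)| ≤ |(|x - t|)| + |c| := abs_sub _ _
      _ = |x - t| + |c| := by rw [abs_abs]
      _ ≤ 2 + |t| + |c| := by linarith
  have hI₁ : Integrable (fun x => |f₁ x|) (μ.restrict (Set.Icc (0:ℝ) 1)) := hIntAbs a
  have hI₂ : Integrable (fun x => |f₂ x|) (μ.restrict (Set.Icc (0:ℝ) 1)) := hIntAbs b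
  -- integral of sum
  have hsum : c ≤ (∫ x in Set.Icc (0:ℝ) 1, |f₁ x| ∂μ) + ∫ x in Set.Icc (0:ℝ) 1, |f₂ x| ∂μ := by
    have := setIntegral_mono_on (integrable_const c) (hI₁.add hI₂)
      measurableSet_Icc (fun x _ => hpt x)
    rw [setIntegral_const, measureReal_def, hμ] at this
    simp only [ENNReal.toReal_one, one_smul, Pi.add_apply] at this
    rwa [integral_add hI₁ hI₂] at this
  have hkey : 1 - Real.sqrt 3 / 2 = c / 2 := by simp [hc_def]; ring
  rcases le_total (∫ x in Set.Icc (0:ℝ) 1, |f₁ x| ∂μ) (∫ x in Set.Icc (0:ℝ) 1, |f₂ x| ∂μ) with h | h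
  · exact ⟨f₂, hLip b, hmean₂, by rw [hkey]; linarith⟩
  · exact ⟨f₁, hLip a, hmean₁, by rw [hkey]; linarith⟩
end

section
/- Let b = (√3 − 1)/2, and define f : [0,1] → ℝ by f(x) = 1/2 + b² − b − |x − b| and f' : [0,1] → ℝ by f'(x) = f(1 − x). Then f and f' both belong to L₀ (each is 1-Lipschitz with integral 0 over [0,1]), and for every x ∈ [0,1]: (|f(x)| + |f'(x)|)/2 ≥ 1 − √3/2, with equality at x = 1/2. (Consequently, for any probability measure μ on [0,1], at least one of ∫|f| dμ and ∫|f'| dμ is at least 1 − √3/2.) -/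
lemma aux_abs_int (a : ℝ) (ha0 : 0 ≤ a) (ha1 : a ≤ 1) :
    ∫ x in (0:ℝ)..1, |x - a| = a^2/2 + (1-a)^2/2 := by
  have hint : ∀ u v : ℝ, IntervalIntegrable (fun x => |x - a|) MeasureTheory.volume u v :=
    fun u v => ((continuous_sub_right a).abs).intervalIntegrable u v
  rw [← intervalIntegral.integral_add_adjacent_intervals (hint 0 a) (hint a 1)]
  have h1 : ∫ x in (0:ℝ)..a, |x - a| = a^2/2 := by
    have e : Set.EqOn (fun x => |x - a|) (fun x => a - x) (Set.uIcc 0 a) := by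
      intro x hx
      rw [Set.uIcc_of_le ha0] at hx
      simp only
      rw [abs_of_nonpos (by linarith [hx.2])]; ring
    rw [intervalIntegral.integral_congr e,
      intervalIntegral.integral_sub intervalIntegrable_const
        intervalIntegral.intervalIntegrable_id]
    simp [integral_id]
    ring
  have h2 : ∫ x in a..(1:ℝ), |x - a| = (1-a)^2/2 := by
    have e : Set.EqOn (fun x => |x - a|) (fun x => x - a) (Set.uIcc a 1) := by
      intro x hx
      rw [Set.uIcc_of_le ha1] at hx
      simp only
      rw [abs_of_nonneg (by linarith [hx.1])]
    rw [intervalIntegral.integral_congr e,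
      intervalIntegral.integral_sub intervalIntegral.intervalIntegrable_id
        intervalIntegrable_const]
    simp [integral_id]
    ring
  rw [h1, h2]

lemma aux_int2 (c a : ℝ) (ha0 : 0 ≤ a) (ha1 : a ≤ 1) :
    ∫ x in (0:ℝ)..1, (c - |x - a|) = c - (a^2/2 + (1-a)^2/2) := by
  rw [intervalIntegral.integral_sub intervalIntegrable_const
      (((continuous_sub_right a).abs).intervalIntegrable 0 1),
    aux_abs_int a ha0 ha1]
  simp

lemma aux_lip (s a : ℝ) (g : ℝ → ℝ) (hg : ∀ x, g x = 2 - s - |x - a|) :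
    ∀ x y : ℝ, |g x - g y| ≤ |x - y| := by
  intro x y
  rw [hg, hg]
  have e : (2 - s - |x - a|) - (2 - s - |y - a|) = |y - a| - |x - a| := by ring
  rw [e, abs_sub_comm]
  have := abs_abs_sub_abs_le_abs_sub (x - a) (y - a)
  have h2 : (x - a) - (y - a) = x - y := by ring
  rwa [h2] at this

/-- With b = (√3 − 1)/2, the functions f(x) = 1/2 + b² − b − |x − b|
and f'(x) = f(1 − x) are mean-zero 1-Lipschitz on [0,1]; their pointwise average
absolute value is at least 1 − √3/2 everywhere on [0,1], with equality at x = 1/2. -/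
theorem stmt_11 (b : ℝ) (hb : b = (Real.sqrt 3 - 1) / 2)
    (f f' : ℝ → ℝ)
    (hf : ∀ x, f x = 1 / 2 + b ^ 2 - b - |x - b|)
    (hf' : ∀ x, f' x = f (1 - x)) :
    ((∀ x ∈ Set.Icc (0 : ℝ) 1, ∀ y ∈ Set.Icc (0 : ℝ) 1, |f x - f y| ≤ |x - y|) ∧
      (∫ x in (0 : ℝ)..1, f x = 0)) ∧
    ((∀ x ∈ Set.Icc (0 : ℝ) 1, ∀ y ∈ Set.Icc (0 : ℝ) 1, |f' x - f' y| ≤ |x - y|) ∧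
      (∫ x in (0 : ℝ)..1, f' x = 0)) ∧
    (∀ x ∈ Set.Icc (0 : ℝ) 1, 1 - Real.sqrt 3 / 2 ≤ (|f x| + |f' x|) / 2) ∧
    (|f (1 / 2)| + |f' (1 / 2)|) / 2 = 1 - Real.sqrt 3 / 2 := by
  have hs : Real.sqrt 3 ^ 2 = 3 := Real.sq_sqrt (by norm_num)
  have hs1 : 1 ≤ Real.sqrt 3 := by nlinarith [Real.sqrt_nonneg 3]
  have hs2 : Real.sqrt 3 ≤ 2 := by nlinarith [Real.sqrt_nonneg 3]
  set s := Real.sqrt 3 with hsdef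
  have hb2 : 2 * b = s - 1 := by rw [hb]; ring
  have hbsq : b ^ 2 = 1 - s / 2 := by rw [hb]; nlinarith [hs]
  have hb0 : 0 ≤ b := by linarith
  have hb1 : b ≤ 1 / 2 := by linarith
  have hK : 1 / 2 + b ^ 2 - b = 2 - s := by linarith
  have hfe : ∀ x, f x = 2 - s - |x - b| := by intro x; rw [hf x, hK]
  have hf'e : ∀ x, f' x = 2 - s - |x - (1 - b)| := by
    intro x
    rw [hf', hfe]
    congr 1
    rw [show (1 - x - b) = -(x - (1 - b)) by ring, abs_neg]
  refine ⟨⟨fun x _ y _ => aux_lip s b f hfe x y, ?_⟩,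
    ⟨fun x _ y _ => aux_lip s (1 - b) f' hf'e x y, ?_⟩, ?_, ?_⟩
  · simp only [hfe]
    rw [aux_int2 (2 - s) b hb0 (by linarith)]
    nlinarith [hbsq, hb2]
  · simp only [hf'e]
    rw [aux_int2 (2 - s) (1 - b) (by linarith) (by linarith)]
    nlinarith [hbsq, hb2]
  · intro x _
    rw [hfe, hf'e]
    rcases le_total x b with h | h
    · have e1 : |x - b| = b - x := by rw [abs_of_nonpos (by linarith)]; ring
      have e2 : |x - (1 - b)| = 1 - b - x := by rw [abs_of_nonpos (by linarith)]; ring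
      rw [e1, e2]
      have a1 := le_abs_self (2 - s - (b - x))
      have a2 := neg_abs_le (2 - s - (1 - b - x))
      linarith
    · rcases le_total x (1 - b) with h2 | h2
      · have e1 : |x - b| = x - b := abs_of_nonneg (by linarith)
        have e2 : |x - (1 - b)| = 1 - b - x := by rw [abs_of_nonpos (by linarith)]; ring
        rw [e1, e2]
        have a1 := le_abs_self (2 - s - (x - b))
        have a2 := le_abs_self (2 - s - (1 - b - x))
        linarith
      · have e1 : |x - b| = x - b := abs_of_nonneg (by linarith)
        have e2 : |x - (1 - b)| = x - (1 - b) := abs_of_nonneg (by linarith)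
        rw [e1, e2]
        have a1 := neg_abs_le (2 - s - (x - b))
        have a2 := le_abs_self (2 - s - (x - (1 - b)))
        linarith
  · have e : f (1 / 2) = 1 - s / 2 := by
      rw [hfe, abs_of_nonneg (by linarith : (0:ℝ) ≤ 1 / 2 - b)]
      linarith
    have e' : f' (1 / 2) = 1 - s / 2 := by
      rw [hf', show (1 : ℝ) - 1 / 2 = 1 / 2 by norm_num, e]
    rw [e, e', abs_of_nonneg (by linarith)]
    ring
end

section
/- Let 0 ≤ c < 1/2, let f ∈ L₀, and let z_i < z_j be points of [c, 1−c] with f(z_i) = f(z_j) = 0 and f(x) ≥ 0 for all x ∈ [z_i, z_j]. Define f' : [0,1] → ℝ by f'(x) = min(x − z_i, z_j − x) for x ∈ [z_i, z_j] and f'(x) = f(x) otherwise, and let f'' = f' − ∫₀¹ f'(t) dt. Then f'' ∈ L₀ and ∫_c^{1−c} |f''(x)| dx ≥ ∫_c^{1−c} |f(x)| dx. (Replacing f on a nonnegative arc between two zeroes by the maximal tent, and renormalizing to mean zero, does not decrease the estimation error against uniform sampling on [c, 1−c].) -/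
open MeasureTheory intervalIntegral

/-- Replacing a mean-zero 1-Lipschitz function f on a nonnegative
arc between two zeroes z_i < z_j in [c, 1−c] by the maximal tent, and
renormalizing to mean zero, yields a function in L₀ whose estimation error
against uniform sampling on [c, 1−c] is at least that of f. -/
theorem stmt_13 (c : ℝ) (hc0 : 0 ≤ c) (hc : c < 1 / 2)
    (f : ℝ → ℝ)
    (hlip : ∀ x ∈ Set.Icc (0 : ℝ) 1, ∀ y ∈ Set.Icc (0 : ℝ) 1,
      |f x - f y| ≤ |x - y|)
    (hint : ∫ x in (0 : ℝ)..1, f x = 0)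
    (zi zj : ℝ) (hzi : zi ∈ Set.Icc c (1 - c)) (hzj : zj ∈ Set.Icc c (1 - c))
    (hij : zi < zj) (hfzi : f zi = 0) (hfzj : f zj = 0)
    (hnonneg : ∀ x ∈ Set.Icc zi zj, 0 ≤ f x)
    (f' f'' : ℝ → ℝ)
    (hf' : ∀ x, f' x =
      if x ∈ Set.Icc zi zj then min (x - zi) (zj - x) else f x)
    (hf'' : ∀ x, f'' x = f' x - ∫ t in (0 : ℝ)..1, f' t) :
    ((∀ x ∈ Set.Icc (0 : ℝ) 1, ∀ y ∈ Set.Icc (0 : ℝ) 1,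
        |f'' x - f'' y| ≤ |x - y|) ∧
      (∫ x in (0 : ℝ)..1, f'' x = 0)) ∧
    (∫ x in c..(1 - c), |f x|) ≤ ∫ x in c..(1 - c), |f'' x| := by
  have hzi0 : (0:ℝ) ≤ zi := le_trans hc0 hzi.1
  have hzj1 : zj ≤ 1 := by linarith [hzj.2]
  have hzj0 : (0:ℝ) ≤ zj := by linarith
  have hzi1 : zi ≤ 1 := by linarith
  have hzizj : zi ≤ zj := hij.le
  have hzic : c ≤ zi := hzi.1
  have hzjc : zj ≤ 1 - c := hzj.2
  -- tent bounds
  have htent0 : ∀ x ∈ Set.Icc zi zj, 0 ≤ f' x := by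
    intro x hx
    rw [hf' x, if_pos hx]
    exact le_min (by linarith [hx.1]) (by linarith [hx.2])
  have htentA : ∀ x ∈ Set.Icc zi zj, f' x ≤ x - zi := by
    intro x hx; rw [hf' x, if_pos hx]; exact min_le_left _ _
  have htentB : ∀ x ∈ Set.Icc zi zj, f' x ≤ zj - x := by
    intro x hx; rw [hf' x, if_pos hx]; exact min_le_right _ _
  -- f x ≤ tent on [zi, zj]
  have hfle : ∀ x ∈ Set.Icc zi zj, f x ≤ f' x := by
    intro x hx
    have hx01 : x ∈ Set.Icc (0:ℝ) 1 := ⟨le_trans hzi0 hx.1, le_trans hx.2 hzj1⟩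
    rw [hf' x, if_pos hx]
    have h1 := hlip x hx01 zi ⟨hzi0, hzi1⟩
    have h2 := hlip x hx01 zj ⟨hzj0, hzj1⟩
    rw [hfzi, sub_zero] at h1
    rw [hfzj, sub_zero] at h2
    have h1' := (abs_le.mp h1).2
    have h2' := (abs_le.mp h2).2
    have e1 : |x - zi| = x - zi := abs_of_nonneg (by linarith [hx.1])
    have e2 : |x - zj| = zj - x := by
      rw [abs_sub_comm]; exact abs_of_nonneg (by linarith [hx.2])
    refine le_min ?_ ?_
    · rw [← e1]; exact h1'
    · rw [← e2]; exact h2'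
  -- mixed Lipschitz case
  have hmix : ∀ x ∈ Set.Icc zi zj, ∀ y ∈ Set.Icc (0:ℝ) 1, y ∉ Set.Icc zi zj →
      |f' x - f' y| ≤ |x - y| := by
    intro x hx y hy hyn
    rw [hf' y, if_neg hyn]
    have hA := htentA x hx
    have hB := htentB x hx
    have h0 := htent0 x hx
    rcases lt_or_ge y zi with hylt | hyge
    · have hfy := hlip y hy zi ⟨hzi0, hzi1⟩
      rw [hfzi, sub_zero] at hfy
      have e : |y - zi| = zi - y := by
        rw [abs_sub_comm]; exact abs_of_nonneg (by linarith)
      rw [e] at hfy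
      have hfy' := abs_le.mp hfy
      have hxy : |x - y| = x - y := abs_of_nonneg (by linarith [hx.1])
      rw [hxy]
      exact abs_le.mpr ⟨by linarith [hx.1], by linarith [hx.1]⟩
    · have hygt : zj < y := by
        by_contra h
        exact hyn ⟨hyge, le_of_not_gt h⟩
      have hfy := hlip y hy zj ⟨hzj0, hzj1⟩
      rw [hfzj, sub_zero] at hfy
      have e : |y - zj| = y - zj := abs_of_nonneg (by linarith)
      rw [e] at hfy
      have hfy' := abs_le.mp hfy
      have hxy : |x - y| = y - x := by
        rw [abs_sub_comm]; exact abs_of_nonneg (by linarith [hx.2])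
      rw [hxy]
      exact abs_le.mpr ⟨by linarith [hx.2], by linarith [hx.2]⟩
  -- f' is 1-Lipschitz on [0,1]
  have hlipf' : ∀ x ∈ Set.Icc (0:ℝ) 1, ∀ y ∈ Set.Icc (0:ℝ) 1,
      |f' x - f' y| ≤ |x - y| := by
    intro x hx y hy
    by_cases hxm : x ∈ Set.Icc zi zj <;> by_cases hym : y ∈ Set.Icc zi zj
    · rw [hf' x, if_pos hxm, hf' y, if_pos hym]
      have h := abs_min_sub_min_le_max (x - zi) (zj - x) (y - zi) (zj - y)
      have e1 : x - zi - (y - zi) = x - y := by ring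
      have e2 : zj - x - (zj - y) = y - x := by ring
      rw [e1, e2, abs_sub_comm y x, max_self] at h
      exact h
    · exact hmix x hxm y hy hym
    · rw [abs_sub_comm, abs_sub_comm x y]
      exact hmix y hym x hx hxm
    · rw [hf' x, if_neg hxm, hf' y, if_neg hym]
      exact hlip x hx y hy
  -- continuity and integrability
  have hcontf : ContinuousOn f (Set.Icc (0:ℝ) 1) := by
    apply LipschitzOnWith.continuousOn (K := 1)
    apply LipschitzOnWith.of_dist_le_mul
    intro x hx y hy
    rw [Real.dist_eq, Real.dist_eq]
    simpa using hlip x hx y hy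
  have hcontf' : ContinuousOn f' (Set.Icc (0:ℝ) 1) := by
    apply LipschitzOnWith.continuousOn (K := 1)
    apply LipschitzOnWith.of_dist_le_mul
    intro x hx y hy
    rw [Real.dist_eq, Real.dist_eq]
    simpa using hlipf' x hx y hy
  have hIg : ∀ (g : ℝ → ℝ), ContinuousOn g (Set.Icc (0:ℝ) 1) → ∀ a b : ℝ,
      0 ≤ a → a ≤ b → b ≤ 1 → IntervalIntegrable g volume a b := by
    intro g hg a b ha hab hb
    apply ContinuousOn.intervalIntegrable
    apply hg.mono
    rw [Set.uIcc_of_le hab]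
    exact Set.Icc_subset_Icc ha hb
  set m := ∫ t in (0:ℝ)..1, f' t with hmdef
  -- equalities of f' with f outside (zi, zj)
  have hEq1 : Set.EqOn f' f (Set.Icc 0 zi) := by
    intro x hx
    rw [hf' x]
    split_ifs with h
    · have : x = zi := le_antisymm hx.2 h.1
      subst this
      rw [hfzi, sub_self]
      exact min_eq_left (by linarith)
    · rfl
  have hEq3 : Set.EqOn f' f (Set.Icc zj 1) := by
    intro x hx
    rw [hf' x]
    split_ifs with h
    · have : x = zj := le_antisymm h.2 hx.1
      subst this
      rw [hfzj, sub_self]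
      exact min_eq_right (by linarith)
    · rfl
  -- splitting integrals
  have I0zi : IntervalIntegrable f' volume 0 zi := hIg f' hcontf' 0 zi le_rfl hzi0 hzi1
  have Izizj : IntervalIntegrable f' volume zi zj := hIg f' hcontf' zi zj hzi0 hzizj hzj1
  have Izj1 : IntervalIntegrable f' volume zj 1 := hIg f' hcontf' zj 1 hzj0 hzj1 le_rfl
  have Izi1 : IntervalIntegrable f' volume zi 1 := hIg f' hcontf' zi 1 hzi0 hzi1 le_rfl
  have J0zi : IntervalIntegrable f volume 0 zi := hIg f hcontf 0 zi le_rfl hzi0 hzi1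
  have Jzizj : IntervalIntegrable f volume zi zj := hIg f hcontf zi zj hzi0 hzizj hzj1
  have Jzj1 : IntervalIntegrable f volume zj 1 := hIg f hcontf zj 1 hzj0 hzj1 le_rfl
  have Jzi1 : IntervalIntegrable f volume zi 1 := hIg f hcontf zi 1 hzi0 hzi1 le_rfl
  have hsplit' : (∫ t in (0:ℝ)..zi, f' t) + ((∫ t in zi..zj, f' t) + ∫ t in zj..(1:ℝ), f' t) = m := by
    rw [integral_add_adjacent_intervals Izizj Izj1,
      integral_add_adjacent_intervals I0zi Izi1]
  have hsplitf : (∫ t in (0:ℝ)..zi, f t) + ((∫ t in zi..zj, f t) + ∫ t in zj..(1:ℝ), f t) = 0 := by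
    rw [integral_add_adjacent_intervals Jzizj Jzj1,
      integral_add_adjacent_intervals J0zi Jzi1, hint]
  have hc1 : ∫ t in (0:ℝ)..zi, f' t = ∫ t in (0:ℝ)..zi, f t := by
    apply integral_congr
    rwa [Set.uIcc_of_le hzi0]
  have hc3 : ∫ t in zj..(1:ℝ), f' t = ∫ t in zj..(1:ℝ), f t := by
    apply integral_congr
    rwa [Set.uIcc_of_le hzj1]
  have hm : m = (∫ t in zi..zj, f' t) - ∫ t in zi..zj, f t := by
    rw [hc1, hc3] at hsplit'
    linarith
  have hm0 : 0 ≤ m := by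
    rw [hm, sub_nonneg]
    exact integral_mono_on hzizj Jzizj Izizj hfle
  -- Part 2 of goal: mean zero
  have hmean : ∫ x in (0:ℝ)..1, f'' x = 0 := by
    have : ∫ x in (0:ℝ)..1, f'' x = ∫ x in (0:ℝ)..1, (f' x - m) := by
      apply integral_congr
      intro x _
      exact hf'' x
    rw [this, integral_sub (hIg f' hcontf' 0 1 le_rfl zero_le_one le_rfl)
      intervalIntegrable_const, intervalIntegral.integral_const]
    simp
    exact sub_eq_zero.mpr hmdef.symm
  -- Part 1 of goal: Lipschitz
  have hlipf'' : ∀ x ∈ Set.Icc (0:ℝ) 1, ∀ y ∈ Set.Icc (0:ℝ) 1,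
      |f'' x - f'' y| ≤ |x - y| := by
    intro x hx y hy
    have e : f'' x - f'' y = f' x - f' y := by rw [hf'' x, hf'' y]; ring
    rw [e]
    exact hlipf' x hx y hy
  refine ⟨⟨hlipf'', hmean⟩, ?_⟩
  -- Part 3: main inequality
  have habs : ∀ x, |f'' x| = |f' x - m| := fun x => by rw [hf'' x]
  -- continuity of relevant functions
  have hcontf'm : ContinuousOn (fun x => |f' x - m|) (Set.Icc (0:ℝ) 1) :=
    ((hcontf'.sub continuousOn_const).abs)
  have hcontfa : ContinuousOn (fun x => |f x|) (Set.Icc (0:ℝ) 1) := hcontf.abs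
  have hcontfam : ContinuousOn (fun x => |f x| - m) (Set.Icc (0:ℝ) 1) :=
    hcontfa.sub continuousOn_const
  have hc1' : 0 ≤ c := hc0
  have h1c : 1 - c ≤ 1 := by linarith
  -- the three pieces
  have hB1 : (∫ x in c..zi, |f x|) - m * (zi - c) ≤ ∫ x in c..zi, |f' x - m| := by
    have hmono : ∫ x in c..zi, (|f x| - m) ≤ ∫ x in c..zi, |f' x - m| := by
      apply integral_mono_on hzic (hIg _ hcontfam c zi hc0 hzic hzi1)
        (hIg _ hcontf'm c zi hc0 hzic hzi1)
      intro x hx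
      have hfx : f' x = f x := hEq1 ⟨le_trans hc0 hx.1, hx.2⟩
      rw [hfx]
      calc |f x| - m = |f x| - |m| := by rw [abs_of_nonneg hm0]
        _ ≤ |f x - m| := abs_sub_abs_le_abs_sub _ _
    rw [integral_sub (hIg _ hcontfa c zi hc0 hzic hzi1) intervalIntegrable_const,
      intervalIntegral.integral_const, smul_eq_mul] at hmono
    linarith [hmono]
  have hB3 : (∫ x in zj..(1-c), |f x|) - m * (1 - c - zj) ≤ ∫ x in zj..(1-c), |f' x - m| := by
    have hmono : ∫ x in zj..(1-c), (|f x| - m) ≤ ∫ x in zj..(1-c), |f' x - m| := by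
      apply integral_mono_on hzjc (hIg _ hcontfam zj (1-c) hzj0 hzjc h1c)
        (hIg _ hcontf'm zj (1-c) hzj0 hzjc h1c)
      intro x hx
      have hfx : f' x = f x := hEq3 ⟨hx.1, le_trans hx.2 h1c⟩
      rw [hfx]
      calc |f x| - m = |f x| - |m| := by rw [abs_of_nonneg hm0]
        _ ≤ |f x - m| := abs_sub_abs_le_abs_sub _ _
    rw [integral_sub (hIg _ hcontfa zj (1-c) hzj0 hzjc h1c) intervalIntegrable_const,
      intervalIntegral.integral_const, smul_eq_mul] at hmono
    linarith [hmono]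
  have hB2 : (∫ x in zi..zj, f' x) - m * (zj - zi) ≤ ∫ x in zi..zj, |f' x - m| := by
    have hmono : ∫ x in zi..zj, (f' x - m) ≤ ∫ x in zi..zj, |f' x - m| := by
      apply integral_mono_on hzizj
        ((hIg f' hcontf' zi zj hzi0 hzizj hzj1).sub intervalIntegrable_const)
        (hIg _ hcontf'm zi zj hzi0 hzizj hzj1)
      intro x _
      exact le_abs_self _
    rw [integral_sub Izizj intervalIntegrable_const, intervalIntegral.integral_const, smul_eq_mul] at hmono
    linarith [hmono]
  have hA2 : ∫ x in zi..zj, |f x| = ∫ x in zi..zj, f x := by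
    apply integral_congr
    intro x hx
    rw [Set.uIcc_of_le hzizj] at hx
    exact abs_of_nonneg (hnonneg x hx)
  -- splits of the two target integrals
  have hsplitA : (∫ x in c..zi, |f x|) + ((∫ x in zi..zj, |f x|) + ∫ x in zj..(1-c), |f x|)
      = ∫ x in c..(1-c), |f x| := by
    rw [integral_add_adjacent_intervals (hIg _ hcontfa zi zj hzi0 hzizj hzj1)
      (hIg _ hcontfa zj (1-c) hzj0 hzjc h1c),
      integral_add_adjacent_intervals (hIg _ hcontfa c zi hc0 hzic hzi1)
      (hIg _ hcontfa zi (1-c) hzi0 (le_trans hzizj hzjc) h1c)]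
  have habs' : ∫ x in c..(1-c), |f'' x| = ∫ x in c..(1-c), |f' x - m| := by
    apply integral_congr
    intro x _
    exact habs x
  have hsplitB : (∫ x in c..zi, |f' x - m|) + ((∫ x in zi..zj, |f' x - m|)
      + ∫ x in zj..(1-c), |f' x - m|) = ∫ x in c..(1-c), |f' x - m| := by
    rw [integral_add_adjacent_intervals (hIg _ hcontf'm zi zj hzi0 hzizj hzj1)
      (hIg _ hcontf'm zj (1-c) hzj0 hzjc h1c),
      integral_add_adjacent_intervals (hIg _ hcontf'm c zi hc0 hzic hzi1)
      (hIg _ hcontf'm zi (1-c) hzi0 (le_trans hzizj hzjc) h1c)]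
  have hkey : m * (zi - c) + m * (zj - zi) + m * (1 - c - zj) ≤ m := by
    nlinarith [mul_nonneg hm0 hc0]
  rw [habs', ← hsplitA, ← hsplitB]
  have hmint : (∫ x in zi..zj, f x) + m = ∫ x in zi..zj, f' x := by linarith [hm]
  linarith [hB1, hB2, hB3, hA2, hkey, hmint]
end
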